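/- Let n ≥ 1 and m ≥ 1. Let K, G ⊆ S^n_+ be closed convex cones with G ⊆ K, let Q, H ∈ S^n, let B^1, …, B^m ∈ S^n, and let F_K be a face of K with G ⊆ F_K. Assume: (C1) if COP(G, Q, H) has an optimal solution, then it has a rank-1 optimal solution; (C2) for every k ∈ {1,…,m}, J_0(B^k) ⊆ K and F_K ∩ J_0(B^k) ⊆ G; (C3) for all distinct k, l ∈ {1,…,m}, F_K ∩ J_0(B^k) ⊆ J_+(B^l); (C4) there exist X̄ ∈ F_K ∩ G, t̄ ∈ ℝ, ȳ ∈ ℝ^m and Ȳ ∈ S^n such that ⟨B^k, X̄⟩ ≥ 0 for all k, ⟨H, X̄⟩ = 1, ȳ_k ≥ 0 for all k, Q − t̄·H − Σ_{k=1}^m ȳ_k·B^k = Ȳ with ⟨Ȳ, X⟩ ≥ 0 for every X ∈ F_K ∩ G, Σ_{k=1}^m ȳ_k·⟨B^k, X̄⟩ = 0, and ⟨Ȳ, X̄⟩ = 0. Then COP(G ∩ J_+({B^1,…,B^m}), Q, H) has a rank-1 optimal solution: there exists x ∈ ℝ^n such that x·xᵀ ∈ G, ⟨B^k, x·xᵀ⟩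 ≥ 0 for all k, ⟨H, x·xᵀ⟩ = 1, and ⟨Q, x·xᵀ⟩ ≤ ⟨Q, X⟩ for every X ∈ G with ⟨B^k, X⟩ ≥ 0 for all k and ⟨H, X⟩ = 1. -/

import Mathlib

open Matrix

noncomputable section


namespace Stmt0Aux

variable {n : ℕ}

lemma vmv_add_left (a b c : Fin n → ℝ) :
    vecMulVec (a + b) c = vecMulVec a c + vecMulVec b c := by
  ext i j; simp [vecMulVec_apply]; ring

lemma vmv_add_right (a b c : Fin n → ℝ) :
    vecMulVec a (b + c) = vecMulVec a b + vecMulVec a c := by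
  ext i j; simp [vecMulVec_apply]; ring

lemma vmv_smul (s : ℝ) (a b : Fin n → ℝ) :
    vecMulVec (s • a) (s • b) = (s * s) • vecMulVec a b := by
  ext i j; simp [vecMulVec_apply]; ring

lemma psd_vmv (x : Fin n → ℝ) : (vecMulVec x x).PosSemidef := by
  refine posSemidef_iff_dotProduct_mulVec.mpr ⟨?_, ?_⟩
  · ext i j; simp [vecMulVec_apply, IsHermitian]; ring
  · intro z
    have : (vecMulVec x x).mulVec z = (x ⬝ᵥ z) • x := by
      ext i; simp only [mulVec, dotProduct, vecMulVec_apply, Pi.smul_apply, smul_eq_mul,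
        Finset.sum_mul, Finset.mul_sum]
      exact Finset.sum_congr rfl fun j _ => by ring
    rw [this]
    simp only [star_trivial, dotProduct_smul]
    have : x ⬝ᵥ z = z ⬝ᵥ x := dotProduct_comm _ _
    simp [smul_eq_mul, this]
    nlinarith [sq_nonneg (z ⬝ᵥ x)]

lemma tr_add (A X Y : Matrix (Fin n) (Fin n) ℝ) :
    (A * (X + Y)).trace = (A * X).trace + (A * Y).trace := by
  rw [Matrix.mul_add, Matrix.trace_add]

lemma tr_smul (A : Matrix (Fin n) (Fin n) ℝ) (c : ℝ) (X : Matrix (Fin n) (Fin n) ℝ) :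
    (A * (c • X)).trace = c * (A * X).trace := by
  rw [Matrix.mul_smul, Matrix.trace_smul, smul_eq_mul]

lemma tr_sum {ι : Type*} (A : Matrix (Fin n) (Fin n) ℝ) (s : Finset ι)
    (P : ι → Matrix (Fin n) (Fin n) ℝ) :
    (A * (∑ i ∈ s, P i)).trace = ∑ i ∈ s, (A * P i).trace := by
  rw [Matrix.mul_sum, Matrix.trace_sum]

/-- decomposition of a PSD real matrix into rank-one pieces -/
lemma psd_decomp {X : Matrix (Fin n) (Fin n) ℝ} (hX : X.PosSemidef) :
    ∃ v : Fin n → (Fin n → ℝ), X = ∑ i, vecMulVec (v i) (v i) := by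
  obtain ⟨C, rfl⟩ : ∃ C : Matrix (Fin n) (Fin n) ℝ, X = Cᴴ * C := by
    open scoped MatrixOrder in
    obtain ⟨C, hC⟩ := CStarAlgebra.nonneg_iff_eq_star_mul_self.mp (Matrix.nonneg_iff_posSemidef.mpr hX)
    exact ⟨C, by simpa [star_eq_conjTranspose] using hC⟩
  refine ⟨fun i => C i, ?_⟩
  ext j k
  simp [Matrix.mul_apply, vecMulVec_apply, Matrix.sum_apply, conjTranspose_apply]

end Stmt0Aux
namespace Stmt0Aux
variable {n : ℕ}

lemma exists_root (c2 c1 c0 : ℝ) (h0 : 0 < c0) (h2 : c2 < 0) :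
    ∃ t : ℝ, c0 + t * c1 + t ^ 2 * c2 = 0 := by
  have hd : 0 ≤ c1 ^ 2 - 4 * c2 * c0 := by nlinarith
  have hsq : Real.sqrt (c1 ^ 2 - 4 * c2 * c0) ^ 2 = c1 ^ 2 - 4 * c2 * c0 := Real.sq_sqrt hd
  refine ⟨(-c1 - Real.sqrt (c1 ^ 2 - 4 * c2 * c0)) / (2 * c2), ?_⟩
  have h2' : c2 ≠ 0 := ne_of_lt h2
  field_simp
  rw [show c1 ^ 2 - c0 * 4 * c2 = c1 ^ 2 - 4 * c2 * c0 by ring]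
  nlinarith [hsq]

lemma tr_vmv_expand (A : Matrix (Fin n) (Fin n) ℝ) (a b : Fin n → ℝ) (t : ℝ) :
    (A * vecMulVec (a + t • b) (a + t • b)).trace =
      (A * vecMulVec a a).trace + t * (A * (vecMulVec a b + vecMulVec b a)).trace
        + t ^ 2 * (A * vecMulVec b b).trace := by
  have h : vecMulVec (a + t • b) (a + t • b) =
      vecMulVec a a + t • (vecMulVec a b + vecMulVec b a) + (t * t) • vecMulVec b b := by
    ext i j
    simp [vecMulVec_apply]
    ring
  rw [h, Matrix.mul_add, Matrix.mul_add, Matrix.trace_add, Matrix.trace_add,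
    Matrix.mul_smul, Matrix.trace_smul, Matrix.mul_smul, Matrix.trace_smul]
  simp only [smul_eq_mul]
  ring

lemma tr_vmv_scale (A : Matrix (Fin n) (Fin n) ℝ) (s : ℝ) (a : Fin n → ℝ) :
    (A * vecMulVec (s • a) (s • a)).trace = s ^ 2 * (A * vecMulVec a a).trace := by
  have h : vecMulVec (s • a) (s • a) = (s ^ 2) • vecMulVec a a := by
    ext i j; simp [vecMulVec_apply]; ring
  rw [h, Matrix.mul_smul, Matrix.trace_smul, smul_eq_mul]

lemma pair_rotate (a b : Fin n → ℝ) (t s : ℝ) (hs : s ^ 2 * (1 + t ^ 2) = 1) :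
    vecMulVec (s • (a + t • b)) (s • (a + t • b))
      + vecMulVec (s • (b - t • a)) (s • (b - t • a))
      = vecMulVec a a + vecMulVec b b := by
  ext i j
  simp only [vecMulVec_apply, Matrix.add_apply, Pi.smul_apply, Pi.add_apply, Pi.sub_apply,
    smul_eq_mul]
  linear_combination (a i * a j + b i * b j) * hs

lemma sturm_zhang (A : Matrix (Fin n) (Fin n) ℝ) {ι : Type} [Fintype ι] [DecidableEq ι]
    (N : ℕ) :
    ∀ v : ι → Fin n → ℝ,
      (Finset.univ.filter (fun i => (A * vecMulVec (v i) (v i)).trace ≠ 0)).card ≤ N →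
      ∑ i, (A * vecMulVec (v i) (v i)).trace = 0 →
      ∃ w : ι → Fin n → ℝ,
        (∑ i, vecMulVec (w i) (w i)) = ∑ i, vecMulVec (v i) (v i) ∧
        ∀ i, (A * vecMulVec (w i) (w i)).trace = 0 := by
  induction N with
  | zero =>
    intro v hcard _
    refine ⟨v, rfl, fun i => ?_⟩
    by_contra hne
    have : i ∈ Finset.univ.filter (fun i => (A * vecMulVec (v i) (v i)).trace ≠ 0) := by
      simp [hne]
    have := Finset.card_pos.mpr ⟨i, this⟩
    omega
  | succ N ih =>
    intro v hcard hsum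
    set q : ι → ℝ := fun i => (A * vecMulVec (v i) (v i)).trace with hq
    have hcardq : (Finset.univ.filter (fun k => q k ≠ 0)).card ≤ N + 1 := hcard
    by_cases hex : ∃ i, q i ≠ 0
    · -- find positive and negative entries
      have hpos : ∃ i, 0 < q i := by
        by_contra hno
        push_neg at hno
        have hall : ∀ i ∈ Finset.univ, q i = 0 :=
          (Finset.sum_eq_zero_iff_of_nonpos (fun i _ => hno i)).mp hsum
        obtain ⟨i, hi⟩ := hex
        exact hi (hall i (Finset.mem_univ i))
      have hneg : ∃ j, q j < 0 := by
        by_contra hno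
        push_neg at hno
        have hall : ∀ i ∈ Finset.univ, q i = 0 :=
          (Finset.sum_eq_zero_iff_of_nonneg (fun i _ => hno i)).mp hsum
        obtain ⟨i, hi⟩ := hpos
        exact (ne_of_gt hi) (hall i (Finset.mem_univ i))
      obtain ⟨i, hi⟩ := hpos
      obtain ⟨j, hj⟩ := hneg
      have hij : i ≠ j := by rintro rfl; linarith
      set a := v i with ha
      set b := v j with hb
      obtain ⟨t, ht⟩ := exists_root (q j) ((A * (vecMulVec a b + vecMulVec b a)).trace) (q i) hi hj
      have hroot : (A * vecMulVec (a + t • b) (a + t • b)).trace = 0 := by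
        rw [tr_vmv_expand]
        simpa using ht
      have h1t : (0:ℝ) < 1 + t ^ 2 := by positivity
      set s : ℝ := (Real.sqrt (1 + t ^ 2))⁻¹ with hsdef
      have hsq : s ^ 2 * (1 + t ^ 2) = 1 := by
        rw [hsdef, inv_pow, Real.sq_sqrt h1t.le]
        field_simp
      set w : ι → Fin n → ℝ :=
        Function.update (Function.update v i (s • (a + t • b))) j (s • (b - t • a)) with hw
      have hwi : w i = s • (a + t • b) := by
        rw [hw, Function.update_of_ne hij, Function.update_self]
      have hwj : w j = s • (b - t • a) := by
        rw [hw, Function.update_self]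
      have hwk : ∀ k, k ≠ i → k ≠ j → w k = v k := by
        intro k hki hkj
        rw [hw, Function.update_of_ne hkj, Function.update_of_ne hki]
      -- sum preservation
      have hsum_pres : (∑ k, vecMulVec (w k) (w k)) = ∑ k, vecMulVec (v k) (v k) := by
        have hpair := pair_rotate a b t s hsq
        rw [← Finset.sum_add_sum_compl ({i, j} : Finset ι),
            ← Finset.sum_add_sum_compl ({i, j} : Finset ι)]
        congr 1
        · rw [Finset.sum_pair hij, Finset.sum_pair hij, hwi, hwj, ← ha, ← hb, hpair]
        · apply Finset.sum_congr rfl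
          intro k hk
          simp only [Finset.mem_compl, Finset.mem_insert, Finset.mem_singleton, not_or] at hk
          rw [hwk k hk.1 hk.2]
      -- q(w i) = 0
      have hqwi : (A * vecMulVec (w i) (w i)).trace = 0 := by
        rw [hwi, tr_vmv_scale, hroot, mul_zero]
      -- new sum is zero
      have hsum' : ∑ k, (A * vecMulVec (w k) (w k)).trace = 0 := by
        have : ∑ k, (A * vecMulVec (w k) (w k)).trace
            = (A * (∑ k, vecMulVec (w k) (w k))).trace := by
          rw [Matrix.mul_sum, Matrix.trace_sum]
        rw [this, hsum_pres, Matrix.mul_sum, Matrix.trace_sum]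
        exact hsum
      -- card decreases
      have hcard' : (Finset.univ.filter
          (fun k => (A * vecMulVec (w k) (w k)).trace ≠ 0)).card ≤ N := by
        have hsub : Finset.univ.filter (fun k => (A * vecMulVec (w k) (w k)).trace ≠ 0)
            ⊆ (Finset.univ.filter (fun k => q k ≠ 0)).erase i := by
          intro k hk
          simp only [Finset.mem_filter, Finset.mem_univ, true_and] at hk
          rcases eq_or_ne k i with rfl | hki
          · exact absurd hqwi hk
          rcases eq_or_ne k j with rfl | hkj
          · refine Finset.mem_erase.mpr ⟨hki, ?_⟩
            simp only [Finset.mem_filter, Finset.mem_univ, true_and]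
            exact ne_of_lt hj
          · refine Finset.mem_erase.mpr ⟨hki, ?_⟩
            simp only [Finset.mem_filter, Finset.mem_univ, true_and]
            rw [hwk k hki hkj] at hk
            exact hk
        have hmem : i ∈ Finset.univ.filter (fun k => q k ≠ 0) := by
          simp only [Finset.mem_filter, Finset.mem_univ, true_and]
          exact ne_of_gt hi
        calc (Finset.univ.filter (fun k => (A * vecMulVec (w k) (w k)).trace ≠ 0)).card
            ≤ ((Finset.univ.filter (fun k => q k ≠ 0)).erase i).card := Finset.card_le_card hsub
          _ = (Finset.univ.filter (fun k => q k ≠ 0)).card - 1 := Finset.card_erase_of_mem hmem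
          _ ≤ N := by
              omega
      obtain ⟨w', hw'sum, hw'zero⟩ := ih w hcard' hsum'
      exact ⟨w', hw'sum.trans hsum_pres, hw'zero⟩
    · push_neg at hex
      exact ⟨v, rfl, hex⟩

end Stmt0Aux

/-- Main theorem (Theorem 3.1 / `theorem:main1`). -/
theorem stmt_0 (n m : ℕ) (hn : 1 ≤ n) (hm : 1 ≤ m)
    (K G FK : Set (Matrix (Fin n) (Fin n) ℝ))
    (Q H : Matrix (Fin n) (Fin n) ℝ) (B : Fin m → Matrix (Fin n) (Fin n) ℝ)
    (hQsym : Q.IsSymm) (hHsym : H.IsSymm) (hBsym : ∀ k, (B k).IsSymm)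
    -- K is a closed convex cone contained in S^n_+
    (hKpsd : ∀ X ∈ K, X.PosSemidef) (hKclosed : IsClosed K) (hKconv : Convex ℝ K)
    (hKcone : ∀ (c : ℝ), 0 ≤ c → ∀ X ∈ K, c • X ∈ K)
    -- G is a closed convex cone contained in K
    (hGpsd : ∀ X ∈ G, X.PosSemidef) (hGclosed : IsClosed G) (hGconv : Convex ℝ G)
    (hGcone : ∀ (c : ℝ), 0 ≤ c → ∀ X ∈ G, c • X ∈ G)
    (hGK : G ⊆ K)
    -- FK is a face of K with G ⊆ FK
    (hFKsub : FK ⊆ K) (hFKconv : Convex ℝ FK)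
    (hFKcone : ∀ (c : ℝ), 0 ≤ c → ∀ X ∈ FK, c • X ∈ FK)
    (hFKface : ∀ X ∈ K, ∀ Y ∈ K, X + Y ∈ FK → X ∈ FK ∧ Y ∈ FK)
    (hGFK : G ⊆ FK)
    -- (C1): if COP(G,Q,H) has an optimal solution then it has a rank-1 optimal solution
    (hC1 : (∃ Xs ∈ G, (H * Xs).trace = 1 ∧
              ∀ X ∈ G, (H * X).trace = 1 → (Q * Xs).trace ≤ (Q * X).trace) →
           ∃ x : Fin n → ℝ, vecMulVec x x ∈ G ∧ (H * vecMulVec x x).trace = 1 ∧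
              ∀ X ∈ G, (H * X).trace = 1 → (Q * vecMulVec x x).trace ≤ (Q * X).trace)
    -- (C2)
    (hC2 : ∀ k, {X : Matrix (Fin n) (Fin n) ℝ | X.PosSemidef ∧ (B k * X).trace = 0} ⊆ K ∧
      FK ∩ {X | X.PosSemidef ∧ (B k * X).trace = 0} ⊆ G)
    -- (C3)
    (hC3 : ∀ k l, k ≠ l →
      FK ∩ {X : Matrix (Fin n) (Fin n) ℝ | X.PosSemidef ∧ (B k * X).trace = 0} ⊆
      {X | X.PosSemidef ∧ 0 ≤ (B l * X).trace})
    -- (C4): KKT stationary condition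
    (hC4 : ∃ (Xb : Matrix (Fin n) (Fin n) ℝ) (tb : ℝ) (yb : Fin m → ℝ)
        (Yb : Matrix (Fin n) (Fin n) ℝ),
      Xb ∈ FK ∩ G ∧ (∀ k, 0 ≤ (B k * Xb).trace) ∧ (H * Xb).trace = 1 ∧
      (∀ k, 0 ≤ yb k) ∧ (Q - tb • H - ∑ k, yb k • B k = Yb) ∧
      (∀ X ∈ FK ∩ G, 0 ≤ (Yb * X).trace) ∧
      (∑ k, yb k * (B k * Xb).trace) = 0 ∧ (Yb * Xb).trace = 0) :
    -- Conclusion: COP(G ∩ J_+(ℬ), Q, H) has a rank-1 optimal solution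
    ∃ x : Fin n → ℝ, vecMulVec x x ∈ G ∧ (∀ k, 0 ≤ (B k * vecMulVec x x).trace) ∧
      (H * vecMulVec x x).trace = 1 ∧
      ∀ X ∈ G, (∀ k, 0 ≤ (B k * X).trace) → (H * X).trace = 1 →
        (Q * vecMulVec x x).trace ≤ (Q * X).trace := by
  classical
  open Stmt0Aux in
  obtain ⟨Xb, tb, yb, Yb, ⟨hXbFK, hXbG⟩, hXbB, hXbH, hyb, hLag, hYbpos, hcompsum, hYbXb⟩ := hC4
  -- The Lagrangian trace identity
  have hQeq : Q = tb • H + (∑ k, yb k • B k) + Yb := by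
    rw [← hLag]; abel
  have hQtr : ∀ X : Matrix (Fin n) (Fin n) ℝ,
      (Q * X).trace = tb * (H * X).trace + (∑ k, yb k * (B k * X).trace) + (Yb * X).trace := by
    intro X
    conv_lhs => rw [hQeq]
    rw [Matrix.add_mul, Matrix.add_mul, Matrix.trace_add, Matrix.trace_add,
      Matrix.smul_mul, Matrix.trace_smul, Finset.sum_mul, Matrix.trace_sum]
    have hsum : ∑ k, ((yb k • B k) * X).trace = ∑ k, yb k * (B k * X).trace :=
      Finset.sum_congr rfl fun k _ => by rw [Matrix.smul_mul, Matrix.trace_smul, smul_eq_mul]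
    rw [hsum, smul_eq_mul]
  -- per-index complementarity at Xb
  have hcompk : ∀ k, yb k * (B k * Xb).trace = 0 := by
    intro k
    have hnn : ∀ k ∈ Finset.univ, 0 ≤ yb k * (B k * Xb).trace :=
      fun k _ => mul_nonneg (hyb k) (hXbB k)
    exact (Finset.sum_eq_zero_iff_of_nonneg hnn).mp hcompsum k (Finset.mem_univ k)
  -- value of Xb
  have hQXb : (Q * Xb).trace = tb := by
    rw [hQtr, hXbH, hcompsum, hYbXb]; ring
  -- lower bound over the feasible region
  have hlb : ∀ X ∈ G, (∀ k, 0 ≤ (B k * X).trace) → (H * X).trace = 1 →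
      tb ≤ (Q * X).trace := by
    intro X hXG hXB hXH
    rw [hQtr, hXH]
    have h1 : 0 ≤ ∑ k, yb k * (B k * X).trace :=
      Finset.sum_nonneg fun k _ => mul_nonneg (hyb k) (hXB k)
    have h2 : 0 ≤ (Yb * X).trace := hYbpos X ⟨hGFK hXG, hXG⟩
    linarith
  -- core construction: from a feasible optimal point with a tight constraint,
  -- extract a feasible rank-one point of the same value
  have core : ∀ Xs ∈ G, (H * Xs).trace = 1 → (∀ k, 0 ≤ (B k * Xs).trace) →
      (Q * Xs).trace = tb → (∃ k0, (B k0 * Xs).trace = 0) →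
      ∃ x : Fin n → ℝ, vecMulVec x x ∈ G ∧ (∀ k, 0 ≤ (B k * vecMulVec x x).trace) ∧
        (H * vecMulVec x x).trace = 1 ∧ (Q * vecMulVec x x).trace = tb := by
    rintro Xs hXsG hXsH hXsB hXsQ ⟨k0, hk0⟩
    obtain ⟨v, hv⟩ := psd_decomp (hGpsd Xs hXsG)
    have hsum0 : ∑ i, (B k0 * vecMulVec (v i) (v i)).trace = 0 := by
      rw [← Matrix.trace_sum, ← Matrix.mul_sum, ← hv]; exact hk0
    obtain ⟨w, hwsum, hwzero⟩ := sturm_zhang (B k0)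
      ((Finset.univ.filter (fun i => (B k0 * vecMulVec (v i) (v i)).trace ≠ 0)).card)
      v le_rfl hsum0
    set P : Fin n → Matrix (Fin n) (Fin n) ℝ := fun i => vecMulVec (w i) (w i) with hP
    have hXs_eq : Xs = ∑ i, P i := by rw [hP]; rw [hwsum, ← hv]
    -- every piece lies in K by (C2)
    have hPiK : ∀ i, P i ∈ K := fun i => (hC2 k0).1 ⟨psd_vmv (w i), hwzero i⟩
    -- sums of pieces lie in K
    have hKadd : ∀ X Y : Matrix (Fin n) (Fin n) ℝ, X ∈ K → Y ∈ K → X + Y ∈ K := by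
      intro X Y hX hY
      have h1 : (1/2 : ℝ) • X + (1/2 : ℝ) • Y ∈ K :=
        hKconv hX hY (by norm_num) (by norm_num) (by norm_num)
      have h2 := hKcone 2 (by norm_num) _ h1
      have : (2:ℝ) • ((1/2 : ℝ) • X + (1/2 : ℝ) • Y) = X + Y := by
        rw [smul_add, smul_smul, smul_smul]; norm_num
      rwa [this] at h2
    have hK0 : (0 : Matrix (Fin n) (Fin n) ℝ) ∈ K := by
      have := hKcone 0 le_rfl Xb (hGK hXbG)
      simpa using this
    have hKsum : ∀ s : Finset (Fin n), (∑ i ∈ s, P i) ∈ K := by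
      intro s
      exact Finset.sum_induction P (· ∈ K) hKadd hK0 (fun i _ => hPiK i)
    -- every piece lies in FK by the face property
    have hPiFK : ∀ i, P i ∈ FK := by
      intro i
      have hmem : P i + ∑ j ∈ Finset.univ.erase i, P j ∈ FK := by
        rw [Finset.add_sum_erase _ P (Finset.mem_univ i), ← hXs_eq]
        exact hGFK hXsG
      exact (hFKface (P i) (hPiK i) _ (hKsum _) hmem).1
    have hPiG : ∀ i, P i ∈ G := fun i => (hC2 k0).2 ⟨hPiFK i, psd_vmv (w i), hwzero i⟩
    have hPiB : ∀ i k, 0 ≤ (B k * P i).trace := by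
      intro i k
      rcases eq_or_ne k k0 with rfl | hne
      · exact le_of_eq (hwzero i).symm
      · exact ((hC3 k0 k hne.symm) ⟨hPiFK i, psd_vmv (w i), hwzero i⟩).2
    have hPiYb : ∀ i, 0 ≤ (Yb * P i).trace := fun i => hYbpos _ ⟨hPiFK i, hPiG i⟩
    -- complementarity at Xs
    have hXscomp : (∑ k, yb k * (B k * Xs).trace) = 0 ∧ (Yb * Xs).trace = 0 := by
      have hid := hQtr Xs
      rw [hXsQ, hXsH] at hid
      have h1 : 0 ≤ ∑ k, yb k * (B k * Xs).trace :=
        Finset.sum_nonneg fun k _ => mul_nonneg (hyb k) (hXsB k)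
      have h2 : 0 ≤ (Yb * Xs).trace := hYbpos Xs ⟨hGFK hXsG, hXsG⟩
      constructor <;> linarith
    have hYbPi : ∀ i, (Yb * P i).trace = 0 := by
      have hsum : ∑ i, (Yb * P i).trace = 0 := by
        rw [← Matrix.trace_sum, ← Matrix.mul_sum, ← hXs_eq]; exact hXscomp.2
      exact fun i => (Finset.sum_eq_zero_iff_of_nonneg (fun i _ => hPiYb i)).mp hsum i
        (Finset.mem_univ i)
    have hybBPi : ∀ i k, yb k * (B k * P i).trace = 0 := by
      intro i k
      rcases (hyb k).eq_or_lt with h0 | hpos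
      · rw [← h0, zero_mul]
      · have hk' : yb k * (B k * Xs).trace = 0 :=
          (Finset.sum_eq_zero_iff_of_nonneg
            (fun k _ => mul_nonneg (hyb k) (hXsB k))).mp hXscomp.1 k (Finset.mem_univ k)
        have hBkXs : (B k * Xs).trace = 0 :=
          (mul_eq_zero.mp hk').resolve_left (ne_of_gt hpos)
        have hsum : ∑ i, (B k * P i).trace = 0 := by
          rw [← Matrix.trace_sum, ← Matrix.mul_sum, ← hXs_eq]; exact hBkXs
        have := (Finset.sum_eq_zero_iff_of_nonneg (fun i _ => hPiB i k)).mp hsum i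
          (Finset.mem_univ i)
        rw [this, mul_zero]
    have hQPi : ∀ i, (Q * P i).trace = tb * (H * P i).trace := by
      intro i
      rw [hQtr, Finset.sum_eq_zero (fun k _ => hybBPi i k), hYbPi i]
      ring
    -- find a piece with positive H-trace
    have hHsum : ∑ i, (H * P i).trace = 1 := by
      rw [← Matrix.trace_sum, ← Matrix.mul_sum, ← hXs_eq]; exact hXsH
    have hex : ∃ i, 0 < (H * P i).trace := by
      by_contra hno
      push_neg at hno
      have : ∑ i, (H * P i).trace ≤ 0 := Finset.sum_nonpos fun i _ => hno i
      linarith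
    obtain ⟨i0, hi0⟩ := hex
    set h0 := (H * P i0).trace with hh0
    refine ⟨(Real.sqrt h0)⁻¹ • w i0, ?_⟩
    have hkey : vecMulVec ((Real.sqrt h0)⁻¹ • w i0) ((Real.sqrt h0)⁻¹ • w i0)
        = h0⁻¹ • P i0 := by
      rw [vmv_smul]
      congr 1
      rw [← mul_inv, Real.mul_self_sqrt hi0.le]
    rw [hkey]
    have hinv : 0 ≤ h0⁻¹ := inv_nonneg.mpr hi0.le
    refine ⟨hGcone _ hinv _ (hPiG i0), ?_, ?_, ?_⟩
    · intro k
      rw [tr_smul]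
      exact mul_nonneg hinv (hPiB i0 k)
    · rw [tr_smul, ← hh0, inv_mul_cancel₀ (ne_of_gt hi0)]
    · rw [tr_smul, hQPi i0, ← hh0, mul_comm tb h0, ← mul_assoc,
        inv_mul_cancel₀ (ne_of_gt hi0), one_mul]
  -- final optimality wrapper
  have finish : ∀ x : Fin n → ℝ, vecMulVec x x ∈ G → (∀ k, 0 ≤ (B k * vecMulVec x x).trace) →
      (H * vecMulVec x x).trace = 1 → (Q * vecMulVec x x).trace = tb →
      ∃ x : Fin n → ℝ, vecMulVec x x ∈ G ∧ (∀ k, 0 ≤ (B k * vecMulVec x x).trace) ∧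
        (H * vecMulVec x x).trace = 1 ∧
        ∀ X ∈ G, (∀ k, 0 ≤ (B k * X).trace) → (H * X).trace = 1 →
          (Q * vecMulVec x x).trace ≤ (Q * X).trace := by
    intro x h1 h2 h3 h4
    exact ⟨x, h1, h2, h3, fun X hXG hXB hXH => by rw [h4]; exact hlb X hXG hXB hXH⟩
  by_cases htight : ∃ k0, (B k0 * Xb).trace = 0
  · obtain ⟨x, h1, h2, h3, h4⟩ := core Xb hXbG hXbH hXbB hQXb htight
    exact finish x h1 h2 h3 h4
  · push_neg at htight
    have hXbBpos : ∀ k, 0 < (B k * Xb).trace :=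
      fun k => lt_of_le_of_ne (hXbB k) (Ne.symm (htight k))
    have hyb0 : ∀ k, yb k = 0 := by
      intro k
      rcases mul_eq_zero.mp (hcompk k) with h | h
      · exact h
      · exact absurd h (htight k)
    -- Xb is optimal for COP(G,Q,H)
    have hGopt : ∀ X ∈ G, (H * X).trace = 1 → tb ≤ (Q * X).trace := by
      intro X hXG hXH
      rw [hQtr, hXH]
      have h1 : ∑ k, yb k * (B k * X).trace = 0 :=
        Finset.sum_eq_zero fun k _ => by rw [hyb0 k, zero_mul]
      have h2 : 0 ≤ (Yb * X).trace := hYbpos X ⟨hGFK hXG, hXG⟩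
      rw [h1]
      linarith
    obtain ⟨x, hxG, hxH, hxopt⟩ := hC1 ⟨Xb, hXbG, hXbH, fun X hXG hXH => by
      rw [hQXb]; exact hGopt X hXG hXH⟩
    have hxQ : (Q * vecMulVec x x).trace = tb := by
      have hle : (Q * vecMulVec x x).trace ≤ tb := by
        have := hxopt Xb hXbG hXbH
        rwa [hQXb] at this
      exact le_antisymm hle (hGopt _ hxG hxH)
    by_cases hxB : ∀ k, 0 ≤ (B k * vecMulVec x x).trace
    · exact finish x hxG hxB hxH hxQ
    · push_neg at hxB
      -- move toward Xb until a constraint becomes tight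
      set a : Fin m → ℝ := fun k => (B k * vecMulVec x x).trace with haf
      set bb : Fin m → ℝ := fun k => (B k * Xb).trace with hbf
      set T : Finset (Fin m) := Finset.univ.filter (fun k => a k < 0) with hT
      have hTne : T.Nonempty := by
        obtain ⟨k, hk⟩ := hxB
        exact ⟨k, by simp [hT, haf, hk]⟩
      set θf : Fin m → ℝ := fun k => a k / (a k - bb k) with hθf
      set θ : ℝ := T.sup' hTne θf with hθ
      obtain ⟨ks, hksT, hksval⟩ := Finset.exists_mem_eq_sup' hTne θf
      have hmemT : ∀ k ∈ T, a k < 0 := by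
        intro k hk
        simpa [hT] using (Finset.mem_filter.mp hk).2
      have hbpos : ∀ k, 0 < bb k := fun k => hXbBpos k
      have hden : ∀ k ∈ T, a k - bb k < 0 := fun k hk => by
        have := hmemT k hk; have := hbpos k; linarith
      have hθfpos : ∀ k ∈ T, 0 < θf k := fun k hk =>
        div_pos_of_neg_of_neg (hmemT k hk) (hden k hk)
      have hθflt : ∀ k ∈ T, θf k < 1 := by
        intro k hk
        have hne : a k - bb k ≠ 0 := ne_of_lt (hden k hk)
        have hid : θf k = 1 + bb k / (a k - bb k) := by
          rw [hθf]
          field_simp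
          ring
        have hneg : bb k / (a k - bb k) < 0 := div_neg_of_pos_of_neg (hbpos k) (hden k hk)
        rw [hid]; linarith
      have hθpos : 0 < θ := by rw [hθ, hksval]; exact hθfpos ks hksT
      have hθlt : θ < 1 := by rw [hθ, hksval]; exact hθflt ks hksT
      set Xθ : Matrix (Fin n) (Fin n) ℝ := (1 - θ) • vecMulVec x x + θ • Xb with hXθ
      have htr : ∀ A : Matrix (Fin n) (Fin n) ℝ,
          (A * Xθ).trace = (1 - θ) * (A * vecMulVec x x).trace + θ * (A * Xb).trace := by
        intro A
        rw [hXθ, tr_add, tr_smul, tr_smul]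
      have hXθG : Xθ ∈ G :=
        hGconv hxG hXbG (by linarith) (by linarith) (by ring)
      have hXθH : (H * Xθ).trace = 1 := by rw [htr, hxH, hXbH]; ring
      have hXθQ : (Q * Xθ).trace = tb := by rw [htr, hxQ, hQXb]; ring
      have hident : ∀ k ∈ T, a k + θf k * (bb k - a k) = 0 := by
        intro k hk
        have hne : a k - bb k ≠ 0 := ne_of_lt (hden k hk)
        rw [hθf]
        field_simp
        ring
      have hXθB : ∀ k, 0 ≤ (B k * Xθ).trace := by
        intro k
        rw [htr]
        show 0 ≤ (1 - θ) * a k + θ * bb k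
        by_cases hkT : k ∈ T
        · have h1 : θf k ≤ θ := by rw [hθ]; exact Finset.le_sup' θf hkT
          have h2 := hident k hkT
          have h3 : bb k - a k > 0 := by have := hmemT k hkT; have := hbpos k; linarith
          nlinarith
        · have h1 : 0 ≤ a k := by
            by_contra hc
            exact hkT (by simp [hT, haf]; push_neg at hc; simpa [haf] using hc)
          have := hbpos k
          nlinarith
      have hXθtight : (B ks * Xθ).trace = 0 := by
        rw [htr]
        show (1 - θ) * a ks + θ * bb ks = 0
        have h2 := hident ks hksT
        have hθks : θ = θf ks := by rw [hθ, hksval]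
        rw [hθks]
        linarith
      obtain ⟨x', h1, h2, h3, h4⟩ := core Xθ hXθG hXθH hXθB hXθQ ⟨ks, hXθtight⟩
      exact finish x' h1 h2 h3 h4
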